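/- Let p_1,...,p_m be nonnegative integers and ℓ̄ ≥ 2 a real number. If for each j there exist positive reals q_1(j),...,q_{p_j}(j) with q_h(j) ≥ 2^{h-1} and the total sum ∑_{j=1}^m ∑_{h=1}^{p_j} q_h(j) ≤ m·ℓ̄, then ∑_{j=1}^m p_j ≤ 2m·log₂ ℓ̄. -/

import Mathlib

open Finset Real

lemma convexOn_two_rpow : ConvexOn ℝ Set.univ (fun x : ℝ => Real.exp (Real.log 2 * x)) := by
  have h := convexOn_exp.comp_affineMap (((Real.log 2) • LinearMap.id : ℝ →ₗ[ℝ] ℝ).toAffineMap)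
  simpa [Function.comp_def, Pi.smul_apply, smul_eq_mul] using h

theorem stmt10 (m : ℕ) (ℓbar : ℝ) (hℓ : 2 ≤ ℓbar)
    (p : Fin m → ℕ) (q : (j : Fin m) → Fin (p j) → ℝ)
    (hqpos : ∀ (j : Fin m) (h : Fin (p j)), 0 < q j h)
    (hqgrow : ∀ (j : Fin m) (h : Fin (p j)), (2 : ℝ) ^ (h : ℕ) ≤ q j h)
    (hsum : ∑ j : Fin m, ∑ h : Fin (p j), q j h ≤ m * ℓbar) :
    (∑ j : Fin m, (p j : ℝ)) ≤ 2 * m * Real.logb 2 ℓbar := by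
  rcases Nat.eq_zero_or_pos m with rfl | hm
  · simp
  have hm' : (0:ℝ) < m := by exact_mod_cast hm
  -- per-j lower bound: 2^(p j) ≤ S j + 1
  have hSj : ∀ j : Fin m, (2:ℝ) ^ (p j) ≤ (∑ h : Fin (p j), q j h) + 1 := by
    intro j
    have h1 : ∑ i ∈ Finset.range (p j), (2:ℝ)^i ≤ ∑ h : Fin (p j), q j h := by
      rw [← Fin.sum_univ_eq_sum_range]
      exact Finset.sum_le_sum fun h _ => hqgrow j h
    have h2 : ∑ i ∈ Finset.range (p j), (2:ℝ)^i = 2 ^ (p j) - 1 := by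
      rw [geom_sum_eq (by norm_num)]; norm_num
    linarith
  -- Jensen
  have hjen := convexOn_two_rpow.map_sum_le (t := Finset.univ) (w := fun _ : Fin m => 1/(m:ℝ))
    (p := fun j => (p j : ℝ)) (fun i _ => by positivity)
    (by rw [Finset.sum_const, Finset.card_univ, Fintype.card_fin, nsmul_eq_mul]; field_simp) (fun i _ => Set.mem_univ _)
  have hexp : ∀ j : Fin m, Real.exp (Real.log 2 * (p j : ℝ)) = (2:ℝ) ^ (p j) := by
    intro j
    rw [mul_comm, Real.exp_nat_mul, Real.exp_log (by norm_num)]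
  have hsum2 : ∑ j : Fin m, (1/(m:ℝ)) * Real.exp (Real.log 2 * (p j : ℝ)) ≤ ℓbar + 1 := by
    calc ∑ j : Fin m, (1/(m:ℝ)) * Real.exp (Real.log 2 * (p j : ℝ))
        = (1/(m:ℝ)) * ∑ j : Fin m, (2:ℝ) ^ (p j) := by
          rw [Finset.mul_sum]; exact Finset.sum_congr rfl fun j _ => by rw [hexp]
      _ ≤ (1/(m:ℝ)) * (m * ℓbar + m) := by
          apply mul_le_mul_of_nonneg_left _ (by positivity)
          calc ∑ j : Fin m, (2:ℝ) ^ (p j)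
              ≤ ∑ j : Fin m, ((∑ h : Fin (p j), q j h) + 1) :=
                Finset.sum_le_sum fun j _ => hSj j
            _ = (∑ j : Fin m, ∑ h : Fin (p j), q j h) + m := by
                rw [Finset.sum_add_distrib]; simp
            _ ≤ m * ℓbar + m := by linarith
      _ = ℓbar + 1 := by field_simp
  have hkey : Real.exp (Real.log 2 * ∑ j : Fin m, (1/(m:ℝ)) • (p j : ℝ)) ≤ ℓbar ^ 2 := by
    refine hjen.trans (hsum2.trans ?_)
    nlinarith
  set P := ∑ j : Fin m, (p j : ℝ) with hP
  have hPm : ∑ j : Fin m, (1/(m:ℝ)) • (p j : ℝ) = P / m := by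
    simp only [smul_eq_mul, ← Finset.mul_sum, hP]; ring
  rw [hPm] at hkey
  have hlog := Real.log_le_log (Real.exp_pos _) hkey
  rw [Real.log_exp, Real.log_pow] at hlog
  have hlog2 : (0:ℝ) < Real.log 2 := Real.log_pos (by norm_num)
  push_cast at hlog
  have hPdiv : P / m * m = P := div_mul_cancel₀ _ (ne_of_gt hm')
  rw [Real.logb, show 2*(m:ℝ)*(Real.log ℓbar/Real.log 2) = (2*m*Real.log ℓbar)/Real.log 2 by ring,
    le_div_iff₀ hlog2]
  nlinarith [mul_le_mul_of_nonneg_left hlog (le_of_lt hm'), hPdiv, hlog2]
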